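/- Let A and B be vertices of X = J(v,k,i) and let x = |A ∩ B|. If there is a walk of odd length 2p + 1 from A to B in X, then p ≥ ⌈(x − i)/Δ⌉. -/

import Mathlib

/-- The generalized Johnson graph `J(v,k,i)`: vertices are the `k`-element subsets of a
`v`-element set, two vertices adjacent iff their intersection has exactly `i` elements. -/
def genJohnsonGraph (v k i : ℕ) :
    SimpleGraph {A : Finset (Fin v) // A.card = k} where
  Adj A B := A ≠ B ∧ (A.1 ∩ B.1).card = i
  symm := ⟨by
    rintro A B ⟨hne, hcard⟩
    exact ⟨hne.symm, by rwa [Finset.inter_comm]⟩⟩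
  loopless := ⟨by rintro A ⟨hne, -⟩; exact hne rfl⟩

/-- Two-step bound: if `C ~ D ~ E` in `J(v,k,i)`, the intersection with a fixed set `A`
grows by at most `Δ = v - 2k + 2i`. -/
lemma two_step_card {v k i : ℕ} (h2k : 2 * k ≤ v)
    (A C D E : Finset (Fin v)) (hC : C.card = k) (hD : D.card = k)
    (hCD : (C ∩ D).card = i) (hDE : (D ∩ E).card = i) :
    (A ∩ E).card ≤ (A ∩ C).card + (v - 2 * k + 2 * i) := by
  have hsub : (A ∩ E) ⊆ (A ∩ C) ∪ ((E ∩ D) ∪ (E \ (C ∪ D))) := by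
    intro x hx
    simp only [Finset.mem_inter, Finset.mem_union, Finset.mem_sdiff] at hx ⊢
    tauto
  have h1 : (A ∩ E).card ≤ (A ∩ C).card + ((E ∩ D).card + (E \ (C ∪ D)).card) :=
    le_trans (Finset.card_le_card hsub)
      (le_trans (Finset.card_union_le _ _)
        (by exact Nat.add_le_add_left (Finset.card_union_le _ _) _))
  have hED : (E ∩ D).card = i := by rwa [Finset.inter_comm]
  have h2 : (E \ (C ∪ D)) ⊆ (C ∪ D)ᶜ := by
    intro x hx
    simp only [Finset.mem_sdiff, Finset.mem_compl] at hx ⊢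
    exact hx.2
  have h3 : (E \ (C ∪ D)).card ≤ v - (C ∪ D).card := by
    calc (E \ (C ∪ D)).card ≤ (C ∪ D)ᶜ.card := Finset.card_le_card h2
    _ = v - (C ∪ D).card := by rw [Finset.card_compl, Fintype.card_fin]
  have h4 : (C ∪ D).card + i = 2 * k := by
    have := Finset.card_union_add_card_inter C D
    rw [hCD, hC, hD] at this; omega
  have h5 : (C ∪ D).card ≤ v := by
    calc (C ∪ D).card ≤ (Finset.univ : Finset (Fin v)).card :=
      Finset.card_le_card (Finset.subset_univ _)
    _ = v := by simp
  omega

/-- Along a walk of even length `2p` in `J(v,k,i)`, the intersection with a fixed set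
grows by at most `p * Δ`. -/
lemma even_walk_card {v k i : ℕ} (h2k : 2 * k ≤ v) (A : Finset (Fin v)) :
    ∀ (p : ℕ) (C B : {A : Finset (Fin v) // A.card = k})
      (w : (genJohnsonGraph v k i).Walk C B), w.length = 2 * p →
      (A ∩ B.1).card ≤ (A ∩ C.1).card + p * (v - 2 * k + 2 * i) := by
  intro p
  induction p with
  | zero =>
    intro C B w hw
    have : C = B := w.eq_of_length_eq_zero (by omega)
    subst this
    simp
  | succ p ih =>
    intro C B w hw
    cases w with
    | nil => simp at hw
    | cons h w' =>
      cases w' with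
      | nil => simp at hw; omega
      | @cons D E _ h2 w'' =>
        rename_i D'
        have hlen : w''.length = 2 * p := by
          simp only [SimpleGraph.Walk.length_cons] at hw; omega
        have hIH := ih _ B w'' hlen
        have hstep := two_step_card (i := i) h2k A C.1 D'.1 E.1 C.2 D'.2 h.2 h2.2
        calc (A ∩ B.1).card ≤ (A ∩ E.1).card + p * (v - 2 * k + 2 * i) := hIH
        _ ≤ (A ∩ C.1).card + (v - 2 * k + 2 * i) + p * (v - 2 * k + 2 * i) := by
            omega
        _ = (A ∩ C.1).card + (p + 1) * (v - 2 * k + 2 * i) := by ring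


/-- If there is a walk of odd length `2p + 1` from `A` to `B` in `J(v,k,i)`,
then `p ≥ ⌈(x - i)/Δ⌉` where `x = |A ∩ B|`. -/
theorem odd_walk_bound (v k i : ℕ) (hik : i < k) (hkv : k < v)
    (h2k : 2 * k ≤ v) (hexc : ¬(v = 2 * k ∧ i = 0))
    (A B : {A : Finset (Fin v) // A.card = k}) (p : ℕ)
    (w : (genJohnsonGraph v k i).Walk A B) (hw : w.length = 2 * p + 1) :
    ((A.1 ∩ B.1).card - i) ⌈/⌉ (v - 2 * k + 2 * i) ≤ p := by
  have hΔ : 0 < v - 2 * k + 2 * i := by omega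
  cases w with
  | nil => simp at hw
  | @cons _ C _ h w' =>
    have hlen : w'.length = 2 * p := by
      simp only [SimpleGraph.Walk.length_cons] at hw; omega
    have hbd := even_walk_card (i := i) h2k A.1 p C B w' hlen
    have hAC : (A.1 ∩ C.1).card = i := h.2
    rw [hAC] at hbd
    rw [Nat.ceilDiv_eq_add_pred_div, Nat.div_le_iff_le_mul_add_pred hΔ,
      Nat.mul_comm (v - 2 * k + 2 * i) p]
    omega
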